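/- arXiv:2603.09598 — 7 statements merged into one kernel-verified Lean document; each statement's English description precedes it below -/
import Mathlib

section
/- Let P = ℙ(ℝ²) be the real projective line and A = {(x, y) ∈ P × P : x ≠ y} with the subspace topology. Let Φ : A → A be a homeomorphism such that: (i) for all (x,y), (x,y') ∈ A, the first coordinates of Φ(x,y) and Φ(x,y') agree; (ii) for all (x,y), (x',y) ∈ A, the second coordinates of Φ(x,y) and Φ(x',y) agree; and (iii), (iv): the same two properties hold for Φ⁻¹. Then there exists a homeomorphism φ : P → P such that Φ(x, y) = (φ(x), φ(y)) for all (x,y) ∈ A. -/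
noncomputable instance : TopologicalSpace (Projectivization ℝ (Fin 2 → ℝ)) :=
  inferInstanceAs (TopologicalSpace (Quotient (projectivizationSetoid ℝ (Fin 2 → ℝ))))

/-- The split annulus: pairs of distinct points of the real projective line. -/
abbrev SplitAnnulus : Type :=
  {p : (Projectivization ℝ (Fin 2 → ℝ)) × (Projectivization ℝ (Fin 2 → ℝ)) // p.1 ≠ p.2}

namespace SplitAnnulusAux

abbrev P := Projectivization ℝ (Fin 2 → ℝ)

lemma v0_ne : (![1, 0] : Fin 2 → ℝ) ≠ 0 := by
  intro h; have := congrFun h 0; simp at this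

lemma v1_ne : (![0, 1] : Fin 2 → ℝ) ≠ 0 := by
  intro h; have := congrFun h 1; simp at this

noncomputable def e0 : P := Projectivization.mk ℝ ![1, 0] v0_ne
noncomputable def e1 : P := Projectivization.mk ℝ ![0, 1] v1_ne

lemma det_iff (v w : Fin 2 → ℝ) (hv : v ≠ 0) (hw : w ≠ 0) :
    Projectivization.mk ℝ v hv = Projectivization.mk ℝ w hw ↔
      v 0 * w 1 - v 1 * w 0 = 0 := by
  rw [Projectivization.mk_eq_mk_iff']
  constructor
  · rintro ⟨a, ha⟩
    have h0 := congrFun ha 0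
    have h1 := congrFun ha 1
    simp only [Pi.smul_apply, smul_eq_mul] at h0 h1
    rw [← h0, ← h1]; ring
  · intro h
    have hcase : w 0 ≠ 0 ∨ w 1 ≠ 0 := by
      by_contra hc
      push_neg at hc
      exact hw (funext fun i => by fin_cases i <;> simp [hc.1, hc.2])
    rcases hcase with h0 | h1
    · refine ⟨v 0 / w 0, funext fun i => ?_⟩
      fin_cases i <;> simp only [Pi.smul_apply, smul_eq_mul, Fin.zero_eta, Fin.mk_one, Fin.isValue]
      · field_simp
      · field_simp; linarith
    · refine ⟨v 1 / w 1, funext fun i => ?_⟩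
      fin_cases i <;> simp only [Pi.smul_apply, smul_eq_mul, Fin.zero_eta, Fin.mk_one, Fin.isValue]
      · field_simp; linarith
      · field_simp

lemma e0_ne_e1 : e0 ≠ e1 := by
  intro h
  unfold e0 e1 at h
  rw [det_iff] at h
  norm_num at h

/-- For each point there is a canonical different point. -/
noncomputable def pick (x : P) : {y : P // y ≠ x} := by
  classical
  exact if h : x = e0 then ⟨e1, by rw [h]; exact e0_ne_e1.symm⟩
  else ⟨e0, fun hh => h hh.symm⟩

/-- Complements of points are open. -/
lemma isOpen_ne (c : P) : IsOpen {x : P | x ≠ c} := by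
  letI : Setoid {v : Fin 2 → ℝ // v ≠ 0} := projectivizationSetoid ℝ (Fin 2 → ℝ)
  have hpre : (Quotient.mk' : {v : Fin 2 → ℝ // v ≠ 0} → P) ⁻¹' {x : P | x ≠ c} =
      {v : {v : Fin 2 → ℝ // v ≠ 0} | v.1 0 * c.rep 1 - v.1 1 * c.rep 0 ≠ 0} := by
    ext ⟨v, hv⟩
    have : (Quotient.mk' ⟨v, hv⟩ : P) = Projectivization.mk ℝ v hv := rfl
    simp only [Set.mem_preimage, Set.mem_setOf_eq, this]
    constructor
    · intro h hd
      exact h (by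
        rw [show c = Projectivization.mk ℝ c.rep c.rep_nonzero from c.mk_rep.symm,
          det_iff]
        exact hd)
    · intro hd h
      rw [show c = Projectivization.mk ℝ c.rep c.rep_nonzero from c.mk_rep.symm,
        det_iff] at h
      exact hd h
  have hopen : IsOpen ((Quotient.mk' : {v : Fin 2 → ℝ // v ≠ 0} → P) ⁻¹' {x : P | x ≠ c}) := by
    rw [hpre]
    have hcont : Continuous fun v : {v : Fin 2 → ℝ // v ≠ 0} =>
        v.1 0 * c.rep 1 - v.1 1 * c.rep 0 := by
      apply Continuous.sub
      · exact (((continuous_apply 0).comp continuous_subtype_val).mul continuous_const)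
      · exact (((continuous_apply 1).comp continuous_subtype_val).mul continuous_const)
    exact IsOpen.preimage hcont _root_.isOpen_ne
  exact isOpen_coinduced.mpr hopen

end SplitAnnulusAux

open SplitAnnulusAux in
/-- Every split homeomorphism of the split annulus is of the form (x,y) ↦ (φ x, φ y)
for a homeomorphism φ of the projective line. -/
theorem stmt3 (Φ : SplitAnnulus ≃ₜ SplitAnnulus)
    (h1 : ∀ p q : SplitAnnulus, p.val.1 = q.val.1 → (Φ p).val.1 = (Φ q).val.1)
    (h2 : ∀ p q : SplitAnnulus, p.val.2 = q.val.2 → (Φ p).val.2 = (Φ q).val.2)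
    (h3 : ∀ p q : SplitAnnulus, p.val.1 = q.val.1 → (Φ.symm p).val.1 = (Φ.symm q).val.1)
    (h4 : ∀ p q : SplitAnnulus, p.val.2 = q.val.2 → (Φ.symm p).val.2 = (Φ.symm q).val.2) :
    ∃ φ : (Projectivization ℝ (Fin 2 → ℝ)) ≃ₜ (Projectivization ℝ (Fin 2 → ℝ)),
      ∀ p : SplitAnnulus, (Φ p).val = (φ p.val.1, φ p.val.2) := by
  -- `F`/`S` : first/second coordinate descriptions of `Φ`; `G`/`T` : same for `Φ.symm`.
  set F : P → P := fun x => (Φ ⟨(x, (pick x).1), Ne.symm (pick x).2⟩).val.1 with hFdef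
  set S : P → P := fun x => (Φ ⟨((pick x).1, x), (pick x).2⟩).val.2 with hSdef
  set G : P → P := fun x => (Φ.symm ⟨(x, (pick x).1), Ne.symm (pick x).2⟩).val.1 with hGdef
  set T : P → P := fun x => (Φ.symm ⟨((pick x).1, x), (pick x).2⟩).val.2 with hTdef
  have hF : ∀ p : SplitAnnulus, (Φ p).val.1 = F p.val.1 := fun p =>
    h1 p ⟨(p.val.1, (pick p.val.1).1), Ne.symm (pick p.val.1).2⟩ rfl
  have hS : ∀ p : SplitAnnulus, (Φ p).val.2 = S p.val.2 := fun p =>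
    h2 p ⟨((pick p.val.2).1, p.val.2), (pick p.val.2).2⟩ rfl
  have hG : ∀ p : SplitAnnulus, (Φ.symm p).val.1 = G p.val.1 := fun p =>
    h3 p ⟨(p.val.1, (pick p.val.1).1), Ne.symm (pick p.val.1).2⟩ rfl
  have hT : ∀ p : SplitAnnulus, (Φ.symm p).val.2 = T p.val.2 := fun p =>
    h4 p ⟨((pick p.val.2).1, p.val.2), (pick p.val.2).2⟩ rfl
  have GF : ∀ x, G (F x) = x := by
    intro x
    have key : (Φ.symm (Φ ⟨(x, (pick x).1), Ne.symm (pick x).2⟩)).val.1 = G (F x) := by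
      rw [hG (Φ ⟨(x, (pick x).1), Ne.symm (pick x).2⟩), hF ⟨(x, (pick x).1), Ne.symm (pick x).2⟩]
    rw [Φ.symm_apply_apply] at key
    exact key.symm
  have FG : ∀ x, F (G x) = x := by
    intro x
    have key : (Φ (Φ.symm ⟨(x, (pick x).1), Ne.symm (pick x).2⟩)).val.1 = F (G x) := by
      rw [hF (Φ.symm ⟨(x, (pick x).1), Ne.symm (pick x).2⟩),
        hG ⟨(x, (pick x).1), Ne.symm (pick x).2⟩]
    rw [Φ.apply_symm_apply] at key
    exact key.symm
  have ST : ∀ x, S (T x) = x := by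
    intro x
    have key : (Φ (Φ.symm ⟨((pick x).1, x), (pick x).2⟩)).val.2 = S (T x) := by
      rw [hS (Φ.symm ⟨((pick x).1, x), (pick x).2⟩), hT ⟨((pick x).1, x), (pick x).2⟩]
    rw [Φ.apply_symm_apply] at key
    exact key.symm
  have SF : ∀ x, S x = F x := by
    intro x
    have hx : T (F x) = x := by
      by_contra hne
      have hprop := (Φ ⟨(x, T (F x)), fun h => hne h.symm⟩).prop
      rw [hF ⟨(x, T (F x)), fun h => hne h.symm⟩, hS ⟨(x, T (F x)), fun h => hne h.symm⟩] at hprop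
      exact hprop (ST (F x)).symm
    calc S x = S (T (F x)) := by rw [hx]
      _ = F x := ST (F x)
  have contF : Continuous F := by
    rw [continuous_iff_continuousAt]
    intro x
    have hc : x ≠ (pick x).1 := Ne.symm (pick x).2
    have hcont : ContinuousOn F {z : P | z ≠ (pick x).1} := by
      rw [continuousOn_iff_continuous_restrict]
      have heq : (({z : P | z ≠ (pick x).1}).domRestrict F) =
          fun z : {z : P // z ≠ (pick x).1} => (Φ ⟨(z.1, (pick x).1), z.2⟩).val.1 := by
        funext z
        exact (hF ⟨(z.1, (pick x).1), z.2⟩).symm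
      rw [heq]
      exact continuous_fst.comp (continuous_subtype_val.comp (Φ.continuous.comp
        (Continuous.subtype_mk (continuous_subtype_val.prodMk continuous_const) _)))
    exact hcont.continuousAt ((isOpen_ne _).mem_nhds hc)
  have contG : Continuous G := by
    rw [continuous_iff_continuousAt]
    intro x
    have hc : x ≠ (pick x).1 := Ne.symm (pick x).2
    have hcont : ContinuousOn G {z : P | z ≠ (pick x).1} := by
      rw [continuousOn_iff_continuous_restrict]
      have heq : (({z : P | z ≠ (pick x).1}).domRestrict G) =
          fun z : {z : P // z ≠ (pick x).1} => (Φ.symm ⟨(z.1, (pick x).1), z.2⟩).val.1 := by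
        funext z
        exact (hG ⟨(z.1, (pick x).1), z.2⟩).symm
      rw [heq]
      exact continuous_fst.comp (continuous_subtype_val.comp (Φ.symm.continuous.comp
        (Continuous.subtype_mk (continuous_subtype_val.prodMk continuous_const) _)))
    exact hcont.continuousAt ((isOpen_ne _).mem_nhds hc)
  refine ⟨Homeomorph.mk ⟨F, G, GF, FG⟩ contF contG, fun p => ?_⟩
  exact Prod.ext (hF p) ((hS p).trans (SF p.val.2))
end

section
/- Let φ : ℝ → ℝ be three times continuously differentiable with φ'(x) > 0 for all x, and suppose that for all x ≠ y one has (φ(x) - φ(y))² = φ'(x) · φ'(y) · (x - y)². Then φ is affine: there exist a, b ∈ ℝ with φ(x) = a·x + b for all x. -/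
/-- A C³ map φ with positive derivative satisfying
(φ(x)-φ(y))² = φ'(x)·φ'(y)·(x-y)² for all x ≠ y is affine. -/
theorem stmt4 (φ : ℝ → ℝ) (hφ : ContDiff ℝ 3 φ) (hd : ∀ x : ℝ, 0 < deriv φ x)
    (h : ∀ x y : ℝ, x ≠ y → (φ x - φ y) ^ 2 = deriv φ x * deriv φ y * (x - y) ^ 2) :
    ∃ a b : ℝ, ∀ x : ℝ, φ x = a * x + b := by
  have hφdiff : Differentiable ℝ φ := hφ.differentiable (by norm_num)
  have h1 : ContDiff ℝ ((2:ℕ)+1) φ := hφ.of_le (by norm_num)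
  have hd2 : Differentiable ℝ (deriv φ) :=
    ((contDiff_succ_iff_deriv.mp h1).2.2).differentiable (by norm_num)
  -- second derivative vanishes everywhere
  have key : ∀ x : ℝ, deriv (deriv φ) x = 0 := by
    intro x₀
    by_contra hc
    set d1 := deriv φ x₀ with hd1def
    set d2 := deriv (deriv φ) x₀ with hd2def
    have hd1pos : 0 < d1 := hd x₀
    set y : ℝ := x₀ + 2 * d1 / d2 with hy
    have hxy : x₀ ≠ y := by
      intro he
      have : 2 * d1 / d2 = 0 := by linarith [he ▸ hy]
      have := (div_eq_zero_iff.mp this)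
      rcases this with h' | h'
      · linarith
      · exact hc h'
    set e1 := deriv φ y with he1def
    have he1pos : 0 < e1 := hd y
    -- the function G is identically zero
    set G : ℝ → ℝ := fun x => (φ x - φ y) ^ 2 - deriv φ x * e1 * (x - y) ^ 2 with hG
    have hGzero : ∀ x, G x = 0 := by
      intro x
      by_cases hx : x = y
      · simp [hG, hx]
      · simp only [hG]
        rw [h x y hx]
        ring
    -- derivative of G at x₀
    have hderivφ : HasDerivAt φ d1 x₀ := (hφdiff x₀).hasDerivAt
    have hderiv2 : HasDerivAt (deriv φ) d2 x₀ := (hd2 x₀).hasDerivAt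
    have hGd : HasDerivAt G (2 * (φ x₀ - φ y) * d1 -
        (d2 * e1 * (x₀ - y) ^ 2 + deriv φ x₀ * e1 * (2 * (x₀ - y)))) x₀ := by
      have h1' : HasDerivAt (fun x => (φ x - φ y) ^ 2) (2 * (φ x₀ - φ y) * d1) x₀ := by
        have := ((hderivφ.sub_const (φ y)).fun_pow 2)
        simpa [mul_comm, mul_assoc, mul_left_comm] using this
      have h2' : HasDerivAt (fun x => deriv φ x * e1 * (x - y) ^ 2)
          (d2 * e1 * (x₀ - y) ^ 2 + deriv φ x₀ * e1 * (2 * (x₀ - y))) x₀ := by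
        have ha : HasDerivAt (fun x => deriv φ x * e1) (d2 * e1) x₀ := hderiv2.mul_const e1
        have hb : HasDerivAt (fun x : ℝ => (x - y) ^ 2) (2 * (x₀ - y)) x₀ := by
          have := ((hasDerivAt_id x₀).sub_const y).fun_pow 2
          simpa [mul_comm] using this
        simpa using ha.fun_mul hb
      simpa [hG] using h1'.fun_sub h2'
    have hGzero' : HasDerivAt G 0 x₀ := by
      have : G = fun _ => (0:ℝ) := funext hGzero
      rw [this]; exact hasDerivAt_const x₀ 0
    have heq : 2 * (φ x₀ - φ y) * d1 -
        (d2 * e1 * (x₀ - y) ^ 2 + deriv φ x₀ * e1 * (2 * (x₀ - y))) = 0 :=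
      hGd.unique hGzero'
    -- with x₀ - y = -2*d1/d2, the bracket vanishes, so φ x₀ = φ y
    have hxy' : x₀ - y = -(2 * d1 / d2) := by rw [hy]; ring
    have hbracket : d2 * e1 * (x₀ - y) ^ 2 + deriv φ x₀ * e1 * (2 * (x₀ - y)) = 0 := by
      rw [hxy', ← hd1def]
      field_simp
      ring
    have hval : φ x₀ = φ y := by
      rw [hbracket] at heq
      have : 2 * (φ x₀ - φ y) * d1 = 0 := by linarith
      have h2 : φ x₀ - φ y = 0 := by
        rcases mul_eq_zero.mp this with h' | h'
        · rcases mul_eq_zero.mp h' with h'' | h''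
          · norm_num at h''
          · exact h''
        · linarith
      linarith
    -- contradiction with original identity
    have := h x₀ y hxy
    rw [hval] at this
    simp [← hd1def, ← he1def] at this
    rcases this with (h' | h') | h'
    · linarith
    · linarith
    · exact (sub_ne_zero.mpr hxy) h'
  -- so deriv φ is constant
  have hconst : ∀ x : ℝ, deriv φ x = deriv φ 0 := by
    intro x
    exact is_const_of_deriv_eq_zero hd2 key x 0
  -- hence φ is affine
  refine ⟨deriv φ 0, φ 0, ?_⟩
  intro x
  set a := deriv φ 0 with ha
  have hψ : ∀ z : ℝ, HasDerivAt (fun t => φ t - a * t) 0 z := by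
    intro z
    have h1' : HasDerivAt φ a z := by
      have := (hφdiff z).hasDerivAt
      rwa [hconst z] at this
    have h2' : HasDerivAt (fun t : ℝ => a * t) a z := by
      simpa using (hasDerivAt_id z).const_mul a
    simpa using h1'.fun_sub h2'
  have : (fun t => φ t - a * t) x = (fun t => φ t - a * t) 0 := by
    apply is_const_of_deriv_eq_zero (fun z => (hψ z).differentiableAt)
    intro z
    exact (hψ z).deriv
  simp at this
  linarith
end

section
/- Let V be a 2-dimensional real vector space and ω a nonzero alternating bilinear form on V (a volume form). Let q be the symmetric bilinear form on V ⊗ V determined by q(u₁ ⊗ u₂, v₁ ⊗ v₂) = -ω(u₁, v₁) · ω(u₂, v₂). Then q has signature (2,2): there exists a basis (b₀, b₁, b₂, b₃) of V ⊗ V with q(b₀,b₀) = q(b₁,b₁) = 1, q(b₂,b₂) = q(b₃,b₃) = -1, and q(bᵢ, bⱼ) = 0 for i ≠ j. -/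
open TensorProduct

/-- The bilinear form -ω⊗ω on V ⊗ V, for a volume form ω on a 2-dimensional real
vector space V, has signature (2,2). -/
theorem stmt5 (V : Type*) [AddCommGroup V] [Module ℝ V]
    (bV : Module.Basis (Fin 2) ℝ V)
    (ω : LinearMap.BilinForm ℝ V) (hω : ω ≠ 0) (halt : ∀ v : V, ω v v = 0)
    (q : LinearMap.BilinForm ℝ (V ⊗[ℝ] V))
    (hq : ∀ u₁ u₂ v₁ v₂ : V,
      q (u₁ ⊗ₜ[ℝ] u₂) (v₁ ⊗ₜ[ℝ] v₂) = -(ω u₁ v₁ * ω u₂ v₂)) :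
    ∃ b : Module.Basis (Fin 4) ℝ (V ⊗[ℝ] V),
      q (b 0) (b 0) = 1 ∧ q (b 1) (b 1) = 1 ∧
      q (b 2) (b 2) = -1 ∧ q (b 3) (b 3) = -1 ∧
      ∀ i j : Fin 4, i ≠ j → q (b i) (b j) = 0 := by
  classical
  have hfin : Module.Finite ℝ V := Module.Finite.of_basis bV
  have h10 : ω (bV 1) (bV 0) = -ω (bV 0) (bV 1) := by
    have h := halt (bV 0 + bV 1)
    simp only [map_add, LinearMap.add_apply, halt] at h
    linarith
  have hc0 : ω (bV 0) (bV 1) ≠ 0 := by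
    intro h
    apply hω
    refine bV.ext fun i => bV.ext fun j => ?_
    fin_cases i <;> fin_cases j <;>
        simp only [Fin.zero_eta, Fin.mk_one, LinearMap.zero_apply] <;>
      first
        | exact halt _
        | exact h
        | (rw [h10, h]; ring)
  have hs2 : Real.sqrt 2 * Real.sqrt 2 = 2 := Real.mul_self_sqrt (by norm_num)
  have hs0 : Real.sqrt 2 ≠ 0 := by positivity
  set k : ℝ := (Real.sqrt 2 * ω (bV 0) (bV 1))⁻¹ with hk
  have hk2 : k * k * (ω (bV 0) (bV 1) * ω (bV 0) (bV 1)) = 2⁻¹ := by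
    rw [hk]; field_simp; nlinarith [hs2]
  set v : Fin 4 → V ⊗[ℝ] V :=
    ![k • (bV 0 ⊗ₜ[ℝ] bV 1 + bV 1 ⊗ₜ[ℝ] bV 0),
      k • (bV 0 ⊗ₜ[ℝ] bV 0 - bV 1 ⊗ₜ[ℝ] bV 1),
      k • (bV 0 ⊗ₜ[ℝ] bV 0 + bV 1 ⊗ₜ[ℝ] bV 1),
      k • (bV 0 ⊗ₜ[ℝ] bV 1 - bV 1 ⊗ₜ[ℝ] bV 0)] with hv
  have ho : ∀ i j : Fin 4, i ≠ j → q (v i) (v j) = 0 := by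
    intro i j hij
    fin_cases i <;> fin_cases j <;>
      first
        | exact absurd rfl hij
        | ((simp [hv, hq, halt, h10, map_add, map_sub, map_smul, smul_add, smul_sub]);
           try nlinarith [hk2])
  have d0 : q (v 0) (v 0) = 1 := by
    simp [hv, hq, halt, h10, map_add, map_sub, map_smul, smul_add, smul_sub]
    nlinarith [hk2]
  have d1 : q (v 1) (v 1) = 1 := by
    simp [hv, hq, halt, h10, map_add, map_sub, map_smul, smul_add, smul_sub]
    nlinarith [hk2]
  have d2 : q (v 2) (v 2) = -1 := by
    simp [hv, hq, halt, h10, map_add, map_sub, map_smul, smul_add, smul_sub]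
    nlinarith [hk2]
  have d3 : q (v 3) (v 3) = -1 := by
    simp [hv, hq, halt, h10, map_add, map_sub, map_smul, smul_add, smul_sub]
    nlinarith [hk2]
  have hd : ∀ i : Fin 4, q (v i) (v i) ≠ 0 := by
    intro i
    fin_cases i
    · show q (v 0) (v 0) ≠ 0; rw [d0]; norm_num
    · show q (v 1) (v 1) ≠ 0; rw [d1]; norm_num
    · show q (v 2) (v 2) ≠ 0; rw [d2]; norm_num
    · show q (v 3) (v 3) ≠ 0; rw [d3]; norm_num
  have li : LinearIndependent ℝ v :=
    LinearMap.linearIndependent_of_isOrthoᵢ (B := q) (fun i j hij => ho i j hij)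
      (fun i h => hd i h)
  have hrank : Fintype.card (Fin 4) = Module.finrank ℝ (V ⊗[ℝ] V) := by
    have h2 : Module.finrank ℝ V = 2 := Module.finrank_eq_card_basis bV
    simp [Module.finrank_tensorProduct, h2]
  refine ⟨basisOfLinearIndependentOfCardEqFinrank li hrank, ?_, ?_, ?_, ?_, ?_⟩ <;>
    simp only [coe_basisOfLinearIndependentOfCardEqFinrank]
  · exact d0
  · exact d1
  · exact d2
  · exact d3
  · exact ho
end

section
/- Let W be a real vector space with a symmetric bilinear form ⟨·,·⟩, let U ⊆ ℝ² be open and connected, let σ : ℝ² → W and λ : ℝ² → ℝ be differentiable at every point of U with ⟨σ(s), σ(s)⟩ = 0 and λ(s) ≠ 0 for all s ∈ U. Suppose that for every s ∈ U there exist u, v ∈ ℝ² with ⟨Dσ(s)(u), Dσ(s)(v)⟩ ≠ 0, and that for all s ∈ U and all u, v ∈ ℝ²: ⟨D(λ·σ)(s)(u), D(λ·σ)(s)(v)⟩ = ⟨Dσ(s)(u), Dσ(s)(v)⟩. Then either λ(s) = 1 for all s ∈ U, or λ(s) = -1 for all s ∈ U. -/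
/-- Uniqueness up to sign: if rescaling an isotropic surface σ by a nonvanishing
differentiable factor λ preserves the first fundamental form at infinity (which is
somewhere nondegenerate), then λ ≡ 1 or λ ≡ -1 on a connected open set. -/
theorem stmt9 (W : Type*) [NormedAddCommGroup W] [NormedSpace ℝ W]
    (B : W →L[ℝ] W →L[ℝ] ℝ) (hsymm : ∀ a b : W, B a b = B b a)
    (U : Set (ℝ × ℝ)) (hU : IsOpen U) (hconn : IsConnected U)
    (σ : ℝ × ℝ → W) (l : ℝ × ℝ → ℝ)
    (hσ : ∀ s ∈ U, DifferentiableAt ℝ σ s)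
    (hl : ∀ s ∈ U, DifferentiableAt ℝ l s)
    (hiso : ∀ s ∈ U, B (σ s) (σ s) = 0)
    (hne : ∀ s ∈ U, l s ≠ 0)
    (hnd : ∀ s ∈ U, ∃ u v : ℝ × ℝ, B (fderiv ℝ σ s u) (fderiv ℝ σ s v) ≠ 0)
    (heq : ∀ s ∈ U, ∀ u v : ℝ × ℝ,
      B (fderiv ℝ (fun t => l t • σ t) s u) (fderiv ℝ (fun t => l t • σ t) s v)
        = B (fderiv ℝ σ s u) (fderiv ℝ σ s v)) :
    (∀ s ∈ U, l s = 1) ∨ (∀ s ∈ U, l s = -1) := by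
  have key : ∀ s ∈ U, l s = 1 ∨ l s = -1 := by
    intro s hs
    have hσs := hσ s hs
    have hls := hl s hs
    have hB : IsBoundedBilinearMap ℝ fun p : W × W => B p.1 p.2 :=
      B.isBoundedBilinearMap
    -- Step 1: B (σ s) (Dσ s u) = 0
    have hBs : ∀ u : ℝ × ℝ, B (σ s) (fderiv ℝ σ s u) = 0 := by
      intro u
      have hf : HasFDerivAt (fun t => B (σ t) (σ t))
          ((hB.deriv (σ s, σ s)).comp ((fderiv ℝ σ s).prod (fderiv ℝ σ s))) s := by
        exact (hB.hasFDerivAt (σ s, σ s)).comp s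
          (HasFDerivAt.prodMk hσs.hasFDerivAt hσs.hasFDerivAt)
      have hzero : fderiv ℝ (fun t => B (σ t) (σ t)) s = 0 := by
        have hev : (fun t => B (σ t) (σ t)) =ᶠ[nhds s] fun _ => (0 : ℝ) :=
          Filter.eventuallyEq_of_mem (hU.mem_nhds hs) hiso
        rw [hev.fderiv_eq, fderiv_fun_const]
        rfl
      have := hf.fderiv
      rw [hzero] at this
      have happ := congrArg (fun f : (ℝ × ℝ) →L[ℝ] ℝ => f u) this.symm
      simp only [ContinuousLinearMap.zero_apply, ContinuousLinearMap.comp_apply,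
        ContinuousLinearMap.prod_apply, hB.deriv_apply] at happ
      rw [hsymm (fderiv ℝ σ s u) (σ s)] at happ
      linarith
    -- Step 2: expand D(l • σ)
    have hD : fderiv ℝ (fun t => l t • σ t) s
        = l s • fderiv ℝ σ s + (fderiv ℝ l s).smulRight (σ s) :=
      (hls.hasFDerivAt.smul hσs.hasFDerivAt).fderiv
    obtain ⟨u, v, huv⟩ := hnd s hs
    have h := heq s hs u v
    rw [hD] at h
    simp only [ContinuousLinearMap.add_apply, ContinuousLinearMap.smul_apply,
      ContinuousLinearMap.smulRight_apply, map_add, map_smul,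
      ContinuousLinearMap.add_apply, ContinuousLinearMap.smul_apply] at h
    have h1 : B (fderiv ℝ σ s u) (σ s) = 0 := by
      rw [hsymm]; exact hBs u
    have h2 : B (σ s) (fderiv ℝ σ s v) = 0 := hBs v
    have h3 : B (σ s) (σ s) = 0 := hiso s hs
    simp only [h1, h2, h3, smul_eq_mul, mul_zero, add_zero, zero_add] at h
    have : l s * l s = 1 := by
      have hfac : (l s * l s - 1) * B (fderiv ℝ σ s u) (fderiv ℝ σ s v) = 0 := by
        ring_nf
        ring_nf at h
        linarith
      rcases mul_eq_zero.mp hfac with h' | h'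
      · linarith
      · exact absurd h' huv
    exact mul_self_eq_one_iff.mp this
  -- Step 3: connectedness
  set V₁ : Set (ℝ × ℝ) := U ∩ l ⁻¹' Set.Ioi 0 with hV₁
  set V₂ : Set (ℝ × ℝ) := U ∩ l ⁻¹' Set.Iio 0 with hV₂
  have hV₁o : IsOpen V₁ := by
    rw [isOpen_iff_mem_nhds]
    rintro x ⟨hxU, hx⟩
    exact Filter.inter_mem (hU.mem_nhds hxU)
      ((hl x hxU).continuousAt.preimage_mem_nhds (isOpen_Ioi.mem_nhds hx))
  have hV₂o : IsOpen V₂ := by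
    rw [isOpen_iff_mem_nhds]
    rintro x ⟨hxU, hx⟩
    exact Filter.inter_mem (hU.mem_nhds hxU)
      ((hl x hxU).continuousAt.preimage_mem_nhds (isOpen_Iio.mem_nhds hx))
  have hsub : U ⊆ V₁ ∪ V₂ := by
    intro x hx
    rcases key x hx with h | h
    · exact Or.inl ⟨hx, by simp [h]⟩
    · exact Or.inr ⟨hx, by simp [h]⟩
  have hdisj : Disjoint V₁ V₂ := by
    rw [Set.disjoint_iff]
    rintro x ⟨⟨_, h1⟩, ⟨_, h2⟩⟩
    simp only [Set.mem_preimage, Set.mem_Ioi, Set.mem_Iio] at h1 h2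
    linarith
  rcases hconn.isPreconnected.subset_or_subset hV₁o hV₂o hdisj hsub with h | h
  · left
    intro s hs
    rcases key s hs with h' | h'
    · exact h'
    · exfalso
      have := (h hs).2
      simp only [Set.mem_preimage, Set.mem_Ioi, h'] at this
      linarith
  · right
    intro s hs
    rcases key s hs with h' | h'
    · exfalso
      have := (h hs).2
      simp only [Set.mem_preimage, Set.mem_Iio, h'] at this
      linarith
    · exact h'
end

section
/- Let W be a real vector space with a symmetric bilinear form ⟨·,·⟩, U ⊆ ℝ² open, and σ, η : ℝ² → W differentiable at every point of U with, for all s ∈ U: ⟨σ(s),σ(s)⟩ = 0, ⟨η(s),η(s)⟩ = 0, ⟨σ(s),η(s)⟩ = 1, and ⟨Dσ(s)(u), η(s)⟩ = 0 for all u ∈ ℝ². Define p = (√2/2)·(σ - η). Then for all s ∈ U: ⟨σ(s), p(s)⟩ = -√2/2, and for all u ∈ ℝ²: ⟨Dp(s)(u), σ(s)⟩ = 0 and ⟨Dp(s)(u), η(s)⟩ = 0. -/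
lemma key_deriv {W : Type*} [NormedAddCommGroup W] [NormedSpace ℝ W]
    (B : W →L[ℝ] W →L[ℝ] ℝ) {φ ψ : ℝ × ℝ → W} {s : ℝ × ℝ}
    (hφ : DifferentiableAt ℝ φ s) (hψ : DifferentiableAt ℝ ψ s)
    {c : ℝ} (hc : ∀ᶠ t in nhds s, B (φ t) (ψ t) = c) (u : ℝ × ℝ) :
    B (φ s) (fderiv ℝ ψ s u) + B (fderiv ℝ φ s u) (ψ s) = 0 := by
  have hb : IsBoundedBilinearMap ℝ (fun p : W × W => B p.1 p.2) :=
    B.isBoundedBilinearMap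
  have h1 : HasFDerivAt (fun t => B (φ t) (ψ t))
      ((hb.deriv (φ s, ψ s)).comp ((fderiv ℝ φ s).prod (fderiv ℝ ψ s))) s := by
    exact (hb.hasFDerivAt (φ s, ψ s)).comp s
      (HasFDerivAt.prodMk hφ.hasFDerivAt hψ.hasFDerivAt)
  have h2 : fderiv ℝ (fun t => B (φ t) (ψ t)) s = fderiv ℝ (fun _ => c) s :=
    Filter.EventuallyEq.fderiv_eq hc
  rw [fderiv_fun_const, h1.fderiv] at h2
  have := congrFun (congrArg DFunLike.coe h2) u
  simpa [hb.deriv_apply] using this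

/-- The Epstein map p = (√2/2)(σ - η) of an isotropic surface σ with dual η is an
envelope of the family of horospheres H(σ(s)): it satisfies ⟨σ, p⟩ = -√2/2 and its
derivative is orthogonal to both σ and η. -/
theorem stmt12 (W : Type*) [NormedAddCommGroup W] [NormedSpace ℝ W]
    (B : W →L[ℝ] W →L[ℝ] ℝ) (hsymm : ∀ a b : W, B a b = B b a)
    (U : Set (ℝ × ℝ)) (hU : IsOpen U)
    (σ η : ℝ × ℝ → W)
    (hσ : ∀ s ∈ U, DifferentiableAt ℝ σ s) (hη : ∀ s ∈ U, DifferentiableAt ℝ η s)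
    (hσσ : ∀ s ∈ U, B (σ s) (σ s) = 0)
    (hηη : ∀ s ∈ U, B (η s) (η s) = 0)
    (hση : ∀ s ∈ U, B (σ s) (η s) = 1)
    (hdual : ∀ s ∈ U, ∀ u : ℝ × ℝ, B (fderiv ℝ σ s u) (η s) = 0) :
    ∀ s ∈ U,
      B (σ s) ((Real.sqrt 2 / 2) • (σ s - η s)) = -(Real.sqrt 2 / 2) ∧
      ∀ u : ℝ × ℝ,
        B (fderiv ℝ (fun t => (Real.sqrt 2 / 2) • (σ t - η t)) s u) (σ s) = 0 ∧
        B (fderiv ℝ (fun t => (Real.sqrt 2 / 2) • (σ t - η t)) s u) (η s) = 0 := by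
  intro s hs
  have hmem := hU.mem_nhds hs
  have hσs := hσ s hs
  have hηs := hη s hs
  -- derivative of p
  have hpder : fderiv ℝ (fun t => (Real.sqrt 2 / 2) • (σ t - η t)) s
      = (Real.sqrt 2 / 2) • (fderiv ℝ σ s - fderiv ℝ η s) := by
    rw [fderiv_fun_const_smul (f := fun t => σ t - η t) (hσs.sub hηs), fderiv_fun_sub hσs hηs]
  -- B(Dσ u, σ) = 0 : differentiate B(σ,σ)=0
  have hσσ' : ∀ u : ℝ × ℝ, B (fderiv ℝ σ s u) (σ s) = 0 := by
    intro u
    have := key_deriv B hσs hσs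
      (Filter.eventually_of_mem hmem (fun t ht => hσσ t ht)) u
    have hsym : B (σ s) (fderiv ℝ σ s u) = B (fderiv ℝ σ s u) (σ s) := hsymm _ _
    linarith [this]
  -- B(Dη u, η) = 0
  have hηη' : ∀ u : ℝ × ℝ, B (fderiv ℝ η s u) (η s) = 0 := by
    intro u
    have := key_deriv B hηs hηs
      (Filter.eventually_of_mem hmem (fun t ht => hηη t ht)) u
    have hsym : B (η s) (fderiv ℝ η s u) = B (fderiv ℝ η s u) (η s) := hsymm _ _
    linarith [this]
  -- B(Dη u, σ) = 0 : differentiate B(σ,η)=1 and use hdual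
  have hησ' : ∀ u : ℝ × ℝ, B (fderiv ℝ η s u) (σ s) = 0 := by
    intro u
    have := key_deriv B hσs hηs
      (Filter.eventually_of_mem hmem (fun t ht => hση t ht)) u
    have hd := hdual s hs u
    have hsym : B (σ s) (fderiv ℝ η s u) = B (fderiv ℝ η s u) (σ s) := hsymm _ _
    linarith [this]
  refine ⟨?_, ?_⟩
  · have h1 := hσσ s hs
    have h2 := hση s hs
    simp [map_smul, map_sub, h1, h2]
  · intro u
    rw [hpder]
    simp only [ContinuousLinearMap.smul_apply, ContinuousLinearMap.sub_apply,
      map_smul, map_sub, ContinuousLinearMap.smul_apply, ContinuousLinearMap.sub_apply]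
    constructor
    · rw [hσσ' u, hησ' u]; simp
    · rw [hdual s hs u, hηη' u]; simp
end

section
/- Let B be a symmetric bilinear form on ℝ⁴ and let x, n, u, e ∈ ℝ⁴ be pairwise B-orthogonal vectors with B(x,x) = -1, B(n,n) = 1, B(u,u) = 1, B(e,e) = -1, and suppose the determinant of the 4×4 matrix with columns x, n, u, e equals 1. Then for any vectors a, b ∈ ℝ⁴ with B(a, x) = 0, the determinant of the 4×4 matrix with columns a, n, u, b equals -B(a, e) · B(b, x). -/
lemma span_of_det_ne (x n u e : Fin 4 → ℝ)
    (hdet : (Matrix.of fun i j : Fin 4 => ![x, n, u, e] j i).det = 1)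
    (v : Fin 4 → ℝ) :
    ∃ c0 c1 c2 c3 : ℝ, v = c0 • x + c1 • n + c2 • u + c3 • e := by
  set M : Matrix (Fin 4) (Fin 4) ℝ := Matrix.of fun i j : Fin 4 => ![x, n, u, e] j i with hM
  have hunit : IsUnit M.det := by rw [hdet]; exact isUnit_one
  have h1 : M * M⁻¹ = 1 := Matrix.mul_nonsing_inv M hunit
  set c : Fin 4 → ℝ := M⁻¹.mulVec v with hc
  have h2 : M.mulVec c = v := by
    rw [hc, Matrix.mulVec_mulVec, h1, Matrix.one_mulVec]
  refine ⟨c 0, c 1, c 2, c 3, ?_⟩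
  funext i
  have := congrFun h2 i
  rw [← this]
  simp [Matrix.mulVec, dotProduct, Fin.sum_univ_four, hM, Matrix.of_apply,
    Matrix.vecHead, Matrix.vecTail]
  ring

/-- Determinant expansion against a pseudo-orthonormal frame (x,n,u,e) of signature
(2,2): if B(a,x) = 0 then det(a,n,u,b) = -B(a,e)·B(b,x). -/
theorem stmt13 (B : LinearMap.BilinForm ℝ (Fin 4 → ℝ))
    (hsymm : ∀ a b : Fin 4 → ℝ, B a b = B b a)
    (x n u e : Fin 4 → ℝ)
    (hxx : B x x = -1) (hnn : B n n = 1) (huu : B u u = 1) (hee : B e e = -1)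
    (hxn : B x n = 0) (hxu : B x u = 0) (hxe : B x e = 0)
    (hnu : B n u = 0) (hne : B n e = 0) (hue : B u e = 0)
    (hdet : (Matrix.of fun i j : Fin 4 => ![x, n, u, e] j i).det = 1) :
    ∀ a b : Fin 4 → ℝ, B a x = 0 →
      (Matrix.of fun i j : Fin 4 => ![a, n, u, b] j i).det = -(B a e * B b x) := by
  intro a b hax
  obtain ⟨a0, a1, a2, a3, ha⟩ := span_of_det_ne x n u e hdet a
  obtain ⟨b0, b1, b2, b3, hb⟩ := span_of_det_ne x n u e hdet b
  have hBax : B a x = -a0 := by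
    rw [ha]
    simp only [map_add, map_smul, LinearMap.add_apply, LinearMap.smul_apply, smul_eq_mul,
      hsymm x x, hsymm n x, hsymm u x, hsymm e x]
    rw [hxx, hxn, hxu, hxe]; ring
  have hBae : B a e = -a3 := by
    rw [ha]
    simp only [map_add, map_smul, LinearMap.add_apply, LinearMap.smul_apply, smul_eq_mul]
    rw [hxe, hne, hue, hee]; ring
  have hBbx : B b x = -b0 := by
    rw [hb]
    simp only [map_add, map_smul, LinearMap.add_apply, LinearMap.smul_apply, smul_eq_mul,
      hsymm x x, hsymm n x, hsymm u x, hsymm e x]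
    rw [hxx, hxn, hxu, hxe]; ring
  have ha0 : a0 = 0 := by rw [hBax] at hax; linarith
  rw [hBae, hBbx]
  set M : Matrix (Fin 4) (Fin 4) ℝ := Matrix.of fun i j : Fin 4 => ![x, n, u, e] j i with hM
  set C : Matrix (Fin 4) (Fin 4) ℝ :=
    Matrix.of fun i j : Fin 4 => ![![(0:ℝ), a1, a2, a3], ![0, 1, 0, 0], ![0, 0, 1, 0],
      ![b0, b1, b2, b3]] j i with hC
  have hfac : (Matrix.of fun i j : Fin 4 => ![a, n, u, b] j i) = M * C := by
    ext i j
    rw [Matrix.mul_apply, Fin.sum_univ_four]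
    fin_cases j <;>
      simp [hM, hC, ha, hb, ha0, Matrix.of_apply, Pi.add_apply, Pi.smul_apply, smul_eq_mul] <;>
      ring
  have hdetC : C.det = -(a3 * b0) := by
    simp [hC, Matrix.det_succ_row_zero, Fin.sum_univ_succ, Fin.castSucc, Fin.castAdd, Fin.castLE]
    simp [Fin.succAbove, Fin.lt_def] <;>
    ring
  rw [hfac, Matrix.det_mul, hdet, hdetC]
  ring
end

section
/- Let φ : ℝ → ℝ be three times continuously differentiable and let x ∈ ℝ with φ'(x) ≠ 0. Set S = φ'''(x)/φ'(x) - (3/2)·(φ''(x)/φ'(x))². Then, as ε → 0 through nonzero values, (ε² · φ'(x) · φ'(x+ε)) / (φ(x) - φ(x+ε))² = 1 + (1/6)·S·ε² + o(ε²); that is, the function ε ↦ (ε²·φ'(x)·φ'(x+ε))/(φ(x)-φ(x+ε))² - 1 - (S/6)·ε² is o(ε²) along the punctured neighborhood filter at 0. -/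
open Asymptotics Filter
open scoped Topology

/-- MVT step: if `h 0 = 0` and `h' = o(t^n)` near `0`, then `h = o(t^(n+1))`. -/
lemma key_step14 {h h' : ℝ → ℝ} {n : ℕ}
    (hd : ∀ᶠ t in 𝓝 (0:ℝ), HasDerivAt h (h' t) t) (h0 : h 0 = 0)
    (ho : h' =o[𝓝 (0:ℝ)] fun t => t ^ n) :
    h =o[𝓝 (0:ℝ)] fun t => t ^ (n+1) := by
  rw [Asymptotics.isLittleO_iff] at ho ⊢
  intro c hc
  have hev := hd.and (ho hc)
  rw [Metric.eventually_nhds_iff] at hev ⊢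
  obtain ⟨r, hr, H⟩ := hev
  refine ⟨r, hr, fun t ht => ?_⟩
  have habs : ∀ u ∈ segment ℝ (0:ℝ) t, |u| ≤ |t| := by
    intro u hu
    obtain ⟨θ, θ', hθ, hθ', hsum, rfl⟩ := hu
    have hval : θ • (0:ℝ) + θ' • t = θ' * t := by simp [smul_eq_mul]
    rw [hval, abs_mul, abs_of_nonneg hθ']
    nlinarith [abs_nonneg t]
  have hmem : ∀ u ∈ segment ℝ (0:ℝ) t, dist u 0 < r := by
    intro u hu
    rw [Real.dist_eq, sub_zero]
    exact lt_of_le_of_lt (habs u hu) (by simpa [Real.dist_eq] using ht)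
  have hdiff : ∀ u ∈ segment ℝ (0:ℝ) t, DifferentiableAt ℝ h u :=
    fun u hu => (H (hmem u hu)).1.differentiableAt
  have hbound : ∀ u ∈ segment ℝ (0:ℝ) t, ‖deriv h u‖ ≤ c * |t| ^ n := by
    intro u hu
    rw [(H (hmem u hu)).1.deriv]
    refine le_trans (H (hmem u hu)).2 ?_
    have : ‖u ^ n‖ ≤ |t| ^ n := by
      rw [Real.norm_eq_abs, abs_pow]
      exact pow_le_pow_left₀ (abs_nonneg u) (habs u hu) n
    nlinarith [this, hc.le]
  have := Convex.norm_image_sub_le_of_norm_deriv_le hdiff hbound (convex_segment _ _)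
    (left_mem_segment ℝ (0:ℝ) t) (right_mem_segment ℝ (0:ℝ) t)
  rw [h0, sub_zero, sub_zero] at this
  calc ‖h t‖ ≤ c * |t| ^ n * ‖t‖ := this
    _ = c * ‖t ^ (n+1)‖ := by
        rw [Real.norm_eq_abs, Real.norm_eq_abs, abs_pow]
        ring

/-- First-order Peano remainder. -/
lemma peano1_14 {g : ℝ → ℝ} {x : ℝ} (hg : HasDerivAt g (deriv g x) x) :
    (fun ε => g (x+ε) - g x - deriv g x * ε) =o[𝓝 (0:ℝ)] fun ε => ε ^ 1 := by
  have htend : Filter.Tendsto (fun ε : ℝ => x + ε) (𝓝 0) (𝓝 x) := by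
    simpa using (continuous_add_left x).tendsto (0:ℝ)
  have h1 := (hasDerivAt_iff_isLittleO.mp hg).comp_tendsto htend
  simp only [Function.comp_def, add_sub_cancel_left, smul_eq_mul] at h1
  refine h1.congr (fun ε => by ring) (fun ε => by ring)

private lemma contDiffAt_deriv14 {f : ℝ → ℝ} {x : ℝ} {n m : ℕ} (h : ContDiffAt ℝ n f x)
    (hmn : (m : WithTop ℕ∞) + 1 ≤ n) : ContDiffAt ℝ m (deriv f) x := by
  have h2 := (h.fderiv_right hmn).clm_apply (contDiffAt_const (c := (1:ℝ)))
  have : deriv f = fun y => fderiv ℝ f y 1 := by ext y; rw [fderiv_apply_one_eq_deriv]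
  rw [this]; exact h2

/-- Second-order Peano remainder. -/
lemma peano2_14 {f : ℝ → ℝ} {x : ℝ} (hf : ContDiffAt ℝ 2 f x) :
    (fun ε => f (x+ε) - f x - deriv f x * ε - deriv (deriv f) x * ε ^ 2 / 2)
      =o[𝓝 (0:ℝ)] fun ε => ε ^ 2 := by
  have htend : Filter.Tendsto (fun ε : ℝ => x + ε) (𝓝 0) (𝓝 x) := by
    simpa using (continuous_add_left x).tendsto (0:ℝ)
  have hg1 : ContDiffAt ℝ 1 (deriv f) x := contDiffAt_deriv14 hf (by norm_num)
  have hev : ∀ᶠ t in 𝓝 (0:ℝ), ContDiffAt ℝ 2 f (x + t) :=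
    htend.eventually (hf.eventually (by simp))
  have hd : ∀ᶠ t in 𝓝 (0:ℝ), HasDerivAt
      (fun ε => f (x+ε) - f x - deriv f x * ε - deriv (deriv f) x * ε ^ 2 / 2)
      (deriv f (x+t) - deriv f x - deriv (deriv f) x * t) t := by
    filter_upwards [hev] with t ht
    have h1 : HasDerivAt (fun ε => f (x+ε)) (deriv f (x+t)) t :=
      HasDerivAt.comp_const_add x t
        (ht.differentiableAt (by norm_num)).hasDerivAt
    have h2 : HasDerivAt (fun ε : ℝ => deriv f x * ε) (deriv f x) t := by
      simpa using (hasDerivAt_id t).const_mul (deriv f x)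
    have h3 : HasDerivAt (fun ε : ℝ => deriv (deriv f) x * ε ^ 2 / 2)
        (deriv (deriv f) x * t) t := by
      have := ((hasDerivAt_pow 2 t).const_mul (deriv (deriv f) x)).div_const 2
      refine this.congr_deriv ?_
      simp; ring
    exact ((h1.sub_const (f x)).sub h2).sub h3
  have ho := peano1_14 (g := deriv f) (x := x)
    ((hg1.differentiableAt one_ne_zero).hasDerivAt)
  have := key_step14 hd (by simp) (ho.congr (fun ε => by ring) (fun ε => rfl))
  exact this

/-- Third-order Peano remainder. -/
lemma peano3_14 {f : ℝ → ℝ} {x : ℝ} (hf : ContDiffAt ℝ 3 f x) :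
    (fun ε => f (x+ε) - f x - deriv f x * ε - deriv (deriv f) x * ε ^ 2 / 2
        - deriv (deriv (deriv f)) x * ε ^ 3 / 6)
      =o[𝓝 (0:ℝ)] fun ε => ε ^ 3 := by
  have htend : Filter.Tendsto (fun ε : ℝ => x + ε) (𝓝 0) (𝓝 x) := by
    simpa using (continuous_add_left x).tendsto (0:ℝ)
  have hg2 : ContDiffAt ℝ 2 (deriv f) x := contDiffAt_deriv14 hf (by norm_num)
  have hev : ∀ᶠ t in 𝓝 (0:ℝ), ContDiffAt ℝ 3 f (x + t) :=
    htend.eventually (hf.eventually (by simp))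
  have hd : ∀ᶠ t in 𝓝 (0:ℝ), HasDerivAt
      (fun ε => f (x+ε) - f x - deriv f x * ε - deriv (deriv f) x * ε ^ 2 / 2
        - deriv (deriv (deriv f)) x * ε ^ 3 / 6)
      (deriv f (x+t) - deriv f x - deriv (deriv f) x * t
        - deriv (deriv (deriv f)) x * t ^ 2 / 2) t := by
    filter_upwards [hev] with t ht
    have h1 : HasDerivAt (fun ε => f (x+ε)) (deriv f (x+t)) t :=
      HasDerivAt.comp_const_add x t
        (ht.differentiableAt (by norm_num)).hasDerivAt
    have h2 : HasDerivAt (fun ε : ℝ => deriv f x * ε) (deriv f x) t := by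
      simpa using (hasDerivAt_id t).const_mul (deriv f x)
    have h3 : HasDerivAt (fun ε : ℝ => deriv (deriv f) x * ε ^ 2 / 2)
        (deriv (deriv f) x * t) t := by
      have := ((hasDerivAt_pow 2 t).const_mul (deriv (deriv f) x)).div_const 2
      refine this.congr_deriv ?_
      simp; ring
    have h4 : HasDerivAt (fun ε : ℝ => deriv (deriv (deriv f)) x * ε ^ 3 / 6)
        (deriv (deriv (deriv f)) x * t ^ 2 / 2) t := by
      have := ((hasDerivAt_pow 3 t).const_mul (deriv (deriv (deriv f)) x)).div_const 6
      refine this.congr_deriv ?_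
      simp; ring
    exact (((h1.sub_const (f x)).sub h2).sub h3).sub h4
  have ho := peano2_14 (f := deriv f) (x := x) hg2
  exact key_step14 hd (by simp) ho

/-- Schwarzian expansion of the conformal factor:
ε²φ'(x)φ'(x+ε)/(φ(x)-φ(x+ε))² = 1 + S_φ(x)/6 · ε² + o(ε²) as ε → 0, ε ≠ 0. -/
theorem stmt14 (φ : ℝ → ℝ) (hφ : ContDiff ℝ 3 φ) (x : ℝ) (hd : deriv φ x ≠ 0) :
    (fun ε : ℝ =>
        ε ^ 2 * deriv φ x * deriv φ (x + ε) / (φ x - φ (x + ε)) ^ 2 - 1 -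
          (iteratedDeriv 3 φ x / deriv φ x
            - 3 / 2 * (iteratedDeriv 2 φ x / deriv φ x) ^ 2) / 6 * ε ^ 2)
      =o[𝓝[≠] (0 : ℝ)] fun ε => ε ^ 2 := by
  set a := deriv φ x with ha_def
  have hb2 : iteratedDeriv 2 φ x = deriv (deriv φ) x := by
    rw [iteratedDeriv_succ, iteratedDeriv_one]
  have hc3 : iteratedDeriv 3 φ x = deriv (deriv (deriv φ)) x := by
    rw [iteratedDeriv_succ, iteratedDeriv_succ, iteratedDeriv_one]
  set b := deriv (deriv φ) x with hb_def
  set c := deriv (deriv (deriv φ)) x with hc_def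
  rw [hb2, hc3]
  set S := c / a - 3 / 2 * (b / a) ^ 2 with hS_def
  set u := S / 6 with hu_def
  have key0 : a * c / 6 - b ^ 2 / 4 - u * a ^ 2 = 0 := by
    rw [hu_def, hS_def]; field_simp; ring
  set l := 𝓝[≠] (0 : ℝ) with hl_def
  have hne : ∀ᶠ ε in l, ε ≠ 0 := eventually_mem_nhdsWithin
  -- Peano remainders
  have hρ := peano3_14 (f := φ) (x := x) hφ.contDiffAt
  have hσ := peano2_14 (f := deriv φ) (x := x)
    (contDiffAt_deriv14 hφ.contDiffAt (by norm_num))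
  -- normalized remainders on the punctured filter
  set w : ℝ → ℝ := fun ε =>
    (φ (x+ε) - φ x - a * ε - b * ε ^ 2 / 2 - c * ε ^ 3 / 6) / ε ^ 3 with hw_def
  set v : ℝ → ℝ := fun ε =>
    (deriv φ (x+ε) - a - b * ε - c * ε ^ 2 / 2) / ε ^ 2 with hv_def
  have hcond3 : ∀ᶠ ε in l, ε ^ 3 = 0 →
      φ (x+ε) - φ x - a * ε - b * ε ^ 2 / 2 - c * ε ^ 3 / 6 = 0 := by
    filter_upwards [hne] with ε hε h3
    exact absurd h3 (pow_ne_zero 3 hε)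
  have hwt : Tendsto w l (𝓝 0) := by
    rw [hw_def]
    have h : (fun ε => φ (x+ε) - φ x - a * ε - b * ε ^ 2 / 2 - c * ε ^ 3 / 6)
        =o[l] fun ε => ε ^ 3 := by
      refine (hρ.mono nhdsWithin_le_nhds).congr (fun ε => ?_) (fun ε => rfl)
      rw [ha_def, hb_def, hc_def]
    rw [isLittleO_iff_tendsto' hcond3] at h
    exact h
  have hcond2 : ∀ᶠ ε in l, ε ^ 2 = 0 →
      deriv φ (x+ε) - a - b * ε - c * ε ^ 2 / 2 = 0 := by
    filter_upwards [hne] with ε hε h2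
    exact absurd h2 (pow_ne_zero 2 hε)
  have hvt : Tendsto v l (𝓝 0) := by
    rw [hv_def]
    have h' : (fun ε => deriv φ (x+ε) - a - b * ε - c * ε ^ 2 / 2)
        =o[l] fun ε => ε ^ 2 := by
      refine (hσ.mono nhdsWithin_le_nhds).congr (fun ε => ?_) (fun ε => rfl)
      rw [ha_def, hb_def, hc_def]
    rw [isLittleO_iff_tendsto' hcond2] at h'
    exact h'
  set F : ℝ → ℝ := fun ε => a + b/2 * ε + c/6 * ε ^ 2 + w ε * ε ^ 2 with hF_def
  have hεt : Tendsto (fun ε : ℝ => ε) l (𝓝 0) := tendsto_id.mono_left nhdsWithin_le_nhds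
  have hFt : Tendsto F l (𝓝 a) := by
    have : Tendsto F l (𝓝 (a + b/2 * 0 + c/6 * 0 ^ 2 + 0 * 0 ^ 2)) := by
      exact (((tendsto_const_nhds.add ((tendsto_const_nhds.mul hεt))).add
        (tendsto_const_nhds.mul (hεt.pow 2))).add (hwt.mul (hεt.pow 2)))
    simpa using this
  have hFne : ∀ᶠ ε in l, F ε ≠ 0 := hFt.eventually_ne hd
  -- numerator and its limit
  set Num : ℝ → ℝ := fun ε =>
    (a*c/6 - b^2/4 - u*a^2) + a * v ε - 2*a* w ε +
      ε * (-b*(c/6 + w ε) - u*a*b +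
        ε*(-(c/6 + w ε)^2 - u*(2*a*(c/6 + w ε) + b^2/4)) +
        ε^2*(-u*b*(c/6 + w ε)) + ε^3*(-u*(c/6 + w ε)^2)) with hNum_def
  have hNumt : Tendsto Num l (𝓝 0) := by
    have hcont : Continuous (fun p : ℝ × ℝ × ℝ =>
        (a*c/6 - b^2/4 - u*a^2) + a * p.2.2 - 2*a* p.2.1 +
        p.1 * (-b*(c/6 + p.2.1) - u*a*b +
          p.1*(-(c/6 + p.2.1)^2 - u*(2*a*(c/6 + p.2.1) + b^2/4)) +
          p.1^2*(-u*b*(c/6 + p.2.1)) + p.1^3*(-u*(c/6 + p.2.1)^2))) := by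
      fun_prop
    have htriple : Tendsto (fun ε => (ε, w ε, v ε)) l (𝓝 ((0:ℝ), (0:ℝ), (0:ℝ))) := by
      rw [nhds_prod_eq, nhds_prod_eq]
      exact hεt.prodMk (hwt.prodMk hvt)
    have := (hcont.tendsto ((0:ℝ), (0:ℝ), (0:ℝ))).comp htriple
    have hval : (a*c/6 - b^2/4 - u*a^2) + a * (0:ℝ) - 2*a*(0:ℝ) +
        (0:ℝ) * (-b*(c/6 + 0) - u*a*b +
          0*(-(c/6 + 0)^2 - u*(2*a*(c/6 + 0) + b^2/4)) +
          0^2*(-u*b*(c/6 + 0)) + 0^3*(-u*(c/6 + 0)^2)) = 0 := by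
      rw [show (a*c/6 - b^2/4 - u*a^2) + a * (0:ℝ) - 2*a*(0:ℝ) +
        (0:ℝ) * (-b*(c/6 + 0) - u*a*b +
          0*(-(c/6 + 0)^2 - u*(2*a*(c/6 + 0) + b^2/4)) +
          0^2*(-u*b*(c/6 + 0)) + 0^3*(-u*(c/6 + 0)^2)) =
        a*c/6 - b^2/4 - u*a^2 by ring]
      exact key0
    rw [hNum_def]
    rw [hval] at this
    exact this
  -- the key eventual identity
  have hkey : ∀ᶠ ε in l,
      (ε ^ 2 * a * deriv φ (x + ε) / (φ x - φ (x + ε)) ^ 2 - 1 - S / 6 * ε ^ 2) / ε ^ 2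
      = Num ε / (F ε) ^ 2 := by
    filter_upwards [hne, hFne] with ε hε hF
    have hP : φ (x+ε) - φ x = ε * F ε := by
      rw [hF_def, hw_def]
      field_simp
      ring
    have hG : deriv φ (x+ε) = a + b*ε + c/2*ε^2 + v ε * ε^2 := by
      rw [hv_def]
      field_simp
      ring
    have hPs : (φ x - φ (x + ε)) ^ 2 = ε ^ 2 * (F ε) ^ 2 := by
      have : φ x - φ (x + ε) = -(ε * F ε) := by rw [← hP]; ring
      rw [this]; ring
    rw [hPs, hG]
    rw [hNum_def]
    field_simp
    ring
  -- conclude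
  have hdiv : Tendsto (fun ε =>
      (ε ^ 2 * a * deriv φ (x + ε) / (φ x - φ (x + ε)) ^ 2 - 1 - S / 6 * ε ^ 2) / ε ^ 2)
      l (𝓝 0) := by
    have h2 : Tendsto (fun ε => Num ε / (F ε) ^ 2) l (𝓝 (0 / a ^ 2)) :=
      hNumt.div (hFt.pow 2) (pow_ne_zero 2 hd)
    rw [zero_div] at h2
    exact h2.congr' (hkey.mono fun ε h => h.symm)
  have hcondT : ∀ᶠ ε in l, ε ^ 2 = 0 →
      ε ^ 2 * a * deriv φ (x + ε) / (φ x - φ (x + ε)) ^ 2 - 1 - S / 6 * ε ^ 2 = 0 := by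
    filter_upwards [hne] with ε hε h2
    exact absurd h2 (pow_ne_zero 2 hε)
  have := (isLittleO_iff_tendsto' (f := fun ε : ℝ =>
      ε ^ 2 * a * deriv φ (x + ε) / (φ x - φ (x + ε)) ^ 2 - 1 - S / 6 * ε ^ 2)
      (g := fun ε : ℝ => ε ^ 2) (l := l) hcondT).mpr hdiv
  exact this.congr (fun ε => by rw [hS_def]) (fun ε => rfl)
end
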